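/- Let T > 0, m ∈ ℕ, H ∈ C²(ℝ²,ℂ), and u ∈ L²((0,T),ℝ) with iterated primitives u_m, u_{m+1} vanishing at 0 and satisfying u_{m+1}(T) = 0. Then ∫₀ᵀ u_m(t) ∫₀ᵗ u_m(τ) H(t,τ) dτ dt = ∫₀ᵀ u_{m+1}(t)² ((1/2)(d/dt)(H(t,t)) − ∂₁H(t,t)) dt + ∫₀ᵀ u_{m+1}(t) ∫₀ᵗ u_{m+1}(τ) ∂₁∂₂H(t,τ) dτ dt. -/

import Mathlib

open MeasureTheory intervalIntegral Set

/-- The iterated primitives of `u` vanishing at `0`. -/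
noncomputable def iterPrim (u : ℝ → ℝ) : ℕ → ℝ → ℝ
  | 0 => u
  | n + 1 => fun t => ∫ s in (0:ℝ)..t, iterPrim u n s

/-- Fubini for a triangle: swapping the order of integration over `{a < τ ≤ t ≤ b}`. -/
lemma tri_swap {a b : ℝ} (hab : a ≤ b) (f g : ℝ → ℂ) (K : ℝ → ℝ → ℂ)
    (hf : IntegrableOn f (Ioc a b)) (hg : IntegrableOn g (Ioc a b))
    (hK : Continuous (Function.uncurry K)) :
    (∫ t in a..b, ∫ τ in a..t, f t * g τ * K t τ)
      = ∫ τ in a..b, ∫ t in τ..b, f t * g τ * K t τ := by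
  set μ := volume.restrict (Ioc a b) with hμ
  have hprod : μ.prod μ = (volume.prod volume).restrict (Ioc a b ×ˢ Ioc a b) :=
    Measure.prod_restrict _ _
  obtain ⟨C, hC⟩ := (isCompact_Icc.prod isCompact_Icc).exists_bound_of_continuousOn
    (s := Icc a b ×ˢ Icc a b) hK.continuousOn
  have hFG : Integrable (fun p : ℝ × ℝ => f p.1 * g p.2) (μ.prod μ) :=
    Integrable.mul_prod hf hg
  have hKbd : ∀ᵐ p ∂(μ.prod μ), ‖Function.uncurry K p‖ ≤ C := by
    rw [hprod]
    filter_upwards [ae_restrict_mem (measurableSet_Ioc.prod measurableSet_Ioc)] with p hp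
    exact hC p ⟨Ioc_subset_Icc_self hp.1, Ioc_subset_Icc_self hp.2⟩
  have hFull : Integrable (fun p : ℝ × ℝ => f p.1 * g p.2 * K p.1 p.2) (μ.prod μ) := by
    have := Integrable.bdd_mul (c := C) hFG (hK.aestronglyMeasurable) hKbd
    exact this.congr (Filter.Eventually.of_forall fun p => by
      simp only [Function.uncurry]; ring)
  set F : ℝ × ℝ → ℂ := fun p => f p.1 * g p.2 * K p.1 p.2 with hF
  set Φ : ℝ × ℝ → ℂ := {p : ℝ × ℝ | p.2 ≤ p.1}.indicator F with hΦ
  have hΦint : Integrable Φ (μ.prod μ) :=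
    hFull.indicator (measurableSet_le measurable_snd measurable_fst)
  have left : (∫ t in a..b, ∫ τ in a..t, f t * g τ * K t τ)
      = ∫ t, ∫ τ, Φ (t, τ) ∂μ ∂μ := by
    rw [intervalIntegral.integral_of_le hab]
    refine setIntegral_congr_fun measurableSet_Ioc (fun t ht => ?_)
    rw [intervalIntegral.integral_of_le ht.1.le]
    have hset : Ioc a t = Iic t ∩ Ioc a b := by
      ext x; simp only [mem_Ioc, mem_inter_iff, mem_Iic]
      constructor
      · rintro ⟨h1, h2⟩; exact ⟨h2, h1, h2.trans ht.2⟩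
      · rintro ⟨h1, h2, _⟩; exact ⟨h2, h1⟩
    calc ∫ τ in Ioc a t, f t * g τ * K t τ
        = ∫ τ in Iic t, f t * g τ * K t τ ∂μ := by
          rw [hμ, Measure.restrict_restrict measurableSet_Iic, ← hset]
      _ = ∫ τ, (Iic t).indicator (fun τ => f t * g τ * K t τ) τ ∂μ :=
          (MeasureTheory.integral_indicator measurableSet_Iic).symm
      _ = ∫ τ, Φ (t, τ) ∂μ := by
          refine integral_congr_ae (Filter.Eventually.of_forall fun τ => ?_)
          by_cases h : τ ≤ t <;> simp [hΦ, hF, indicator_apply, h]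
  have right : (∫ τ in a..b, ∫ t in τ..b, f t * g τ * K t τ)
      = ∫ τ, ∫ t, Φ (t, τ) ∂μ ∂μ := by
    rw [intervalIntegral.integral_of_le hab]
    refine setIntegral_congr_fun measurableSet_Ioc (fun τ hτ => ?_)
    rw [intervalIntegral.integral_of_le hτ.2]
    have hset : Icc τ b = Ici τ ∩ Ioc a b := by
      ext x; simp only [mem_Icc, mem_inter_iff, mem_Ici, mem_Ioc]
      constructor
      · rintro ⟨h1, h2⟩; exact ⟨h1, lt_of_lt_of_le hτ.1 h1, h2⟩
      · rintro ⟨h1, _, h3⟩; exact ⟨h1, h3⟩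
    calc ∫ t in Ioc τ b, f t * g τ * K t τ
        = ∫ t in Icc τ b, f t * g τ * K t τ := (integral_Icc_eq_integral_Ioc).symm
      _ = ∫ t in Ici τ, f t * g τ * K t τ ∂μ := by
          rw [hμ, Measure.restrict_restrict measurableSet_Ici, ← hset]
      _ = ∫ t, (Ici τ).indicator (fun t => f t * g τ * K t τ) t ∂μ :=
          (MeasureTheory.integral_indicator measurableSet_Ici).symm
      _ = ∫ t, Φ (t, τ) ∂μ := by
          refine integral_congr_ae (Filter.Eventually.of_forall fun t => ?_)
          by_cases h : τ ≤ t <;> simp [hΦ, hF, indicator_apply, h]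
  rw [left, right]
  exact MeasureTheory.integral_integral_swap (f := fun t τ => Φ (t, τ)) hΦint

/-- Integration by parts against an integrable density, proved via Fubini
(no differentiability of the primitive is required). -/
lemma ibp {a b : ℝ} (hab : a ≤ b) (f φ φ' : ℝ → ℂ)
    (hf : IntegrableOn f (Ioc a b))
    (hφ : ∀ t, HasDerivAt φ (φ' t) t) (hφ' : Continuous φ') :
    (∫ t in a..b, f t * φ t)
      = (∫ t in a..b, f t) * φ b - ∫ t in a..b, (∫ s in a..t, f s) * φ' t := by
  have hfi : IntervalIntegrable f volume a b := by
    rw [intervalIntegrable_iff_integrableOn_Ioc_of_le hab]; exact hf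
  have hprim : Continuous fun t => ∫ s in b..t, φ' s :=
    intervalIntegral.continuous_primitive (fun _ _ => hφ'.intervalIntegrable _ _) b
  have key : ∀ t, φ t = φ b - ∫ s in t..b, φ' s := by
    intro t
    have h := intervalIntegral.integral_eq_sub_of_hasDerivAt
      (f := φ) (f' := φ') (a := t) (b := b) (fun x _ => hφ x) (hφ'.intervalIntegrable t b)
    rw [h]; ring
  have i2 : IntervalIntegrable (fun t => f t * ∫ s in t..b, φ' s) volume a b := by
    refine hfi.mul_continuousOn ?_
    have : Continuous fun t => ∫ s in t..b, φ' s := by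
      have : (fun t => ∫ s in t..b, φ' s) = fun t => -∫ s in b..t, φ' s := by
        funext t; rw [intervalIntegral.integral_symm]
      rw [this]; exact hprim.neg
    exact this.continuousOn
  calc (∫ t in a..b, f t * φ t)
      = ∫ t in a..b, (f t * φ b - f t * ∫ s in t..b, φ' s) := by
        refine intervalIntegral.integral_congr (fun t _ => ?_)
        rw [key t]; ring
    _ = (∫ t in a..b, f t * φ b) - ∫ t in a..b, f t * ∫ s in t..b, φ' s :=
        intervalIntegral.integral_sub (hfi.mul_const _) i2
    _ = (∫ t in a..b, f t) * φ b - ∫ t in a..b, (∫ s in a..t, f s) * φ' t := by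
        rw [intervalIntegral.integral_mul_const]
        congr 1
        have swap := tri_swap hab φ' f (fun _ _ => (1:ℂ)) (hφ'.integrableOn_Ioc) hf
          continuous_const
        calc (∫ t in a..b, f t * ∫ s in t..b, φ' s)
            = ∫ t in a..b, ∫ s in t..b, φ' s * f t * 1 := by
              refine intervalIntegral.integral_congr (fun t _ => ?_)
              rw [← intervalIntegral.integral_const_mul]
              refine intervalIntegral.integral_congr (fun s _ => ?_); ring
          _ = ∫ s in a..b, ∫ t in a..s, φ' s * f t * 1 := swap.symm
          _ = ∫ t in a..b, (∫ s in a..t, f s) * φ' t := by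
              refine intervalIntegral.integral_congr (fun s _ => ?_)
              rw [← intervalIntegral.integral_mul_const]
              refine intervalIntegral.integral_congr (fun t _ => ?_); ring

/-- `∫ f · (primitive of f) = (primitive of f at b)² / 2`, via the symmetry of the square. -/
lemma half_sq {a b : ℝ} (hab : a ≤ b) (f : ℝ → ℂ)
    (hf : IntegrableOn f (Icc a b)) :
    (∫ t in a..b, f t * ∫ s in a..t, f s) = (∫ s in a..b, f s) ^ 2 / 2 := by
  have hf' : IntegrableOn f (Ioc a b) := hf.mono_set Ioc_subset_Icc_self
  have hfi : IntervalIntegrable f volume a b := by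
    rw [intervalIntegrable_iff_integrableOn_Ioc_of_le hab]; exact hf'
  have hIcont : ContinuousOn (fun t => ∫ s in a..t, f s) (uIcc a b) :=
    intervalIntegral.continuousOn_primitive_interval (by rwa [uIcc_of_le hab])
  have swap := tri_swap hab f f (fun _ _ => (1:ℂ)) hf' hf' continuous_const
  have l1 : (∫ t in a..b, ∫ τ in a..t, f t * f τ * 1)
      = ∫ t in a..b, f t * ∫ s in a..t, f s := by
    refine intervalIntegral.integral_congr (fun t _ => ?_)
    rw [← intervalIntegral.integral_const_mul]
    exact intervalIntegral.integral_congr (fun s _ => by ring)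
  have l2 : (∫ τ in a..b, ∫ t in τ..b, f t * f τ * 1)
      = ∫ τ in a..b, f τ * ((∫ s in a..b, f s) - ∫ s in a..τ, f s) := by
    refine intervalIntegral.integral_congr (fun τ hτ => ?_)
    rw [uIcc_of_le hab] at hτ
    have : (∫ t in τ..b, f t * f τ * 1) = ∫ t in τ..b, f τ * f t :=
      intervalIntegral.integral_congr (fun t _ => by ring)
    rw [this, intervalIntegral.integral_const_mul]
    congr 1
    rw [← intervalIntegral.integral_interval_sub_left hfi
      (hfi.mono_set (by rw [uIcc_of_le hab, uIcc_of_le hτ.1]; exact Icc_subset_Icc_right hτ.2))]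
  have split : (∫ τ in a..b, f τ * ((∫ s in a..b, f s) - ∫ s in a..τ, f s))
      = (∫ s in a..b, f s) ^ 2 - ∫ t in a..b, f t * ∫ s in a..t, f s := by
    have i1 : IntervalIntegrable (fun τ => f τ * ∫ s in a..b, f s) volume a b :=
      hfi.mul_const _
    have i2 : IntervalIntegrable (fun τ => f τ * ∫ s in a..τ, f s) volume a b :=
      hfi.mul_continuousOn hIcont
    have : (∫ τ in a..b, f τ * ((∫ s in a..b, f s) - ∫ s in a..τ, f s))
        = ∫ τ in a..b, (f τ * (∫ s in a..b, f s) - f τ * ∫ s in a..τ, f s) :=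
      intervalIntegral.integral_congr (fun τ _ => by ring)
    rw [this, intervalIntegral.integral_sub i1 i2, intervalIntegral.integral_mul_const]
    ring
  have h := swap
  rw [l1, l2, split] at h
  linear_combination h / 2

lemma iterPrim_succ_apply (u : ℝ → ℝ) (n : ℕ) (t : ℝ) :
    iterPrim u (n + 1) t = ∫ s in (0:ℝ)..t, iterPrim u n s := rfl

lemma iterPrim_cont {u : ℝ → ℝ} {T : ℝ} (hT : 0 ≤ T) {k : ℕ}
    (h : IntegrableOn (iterPrim u k) (Ioc 0 T)) :
    ContinuousOn (iterPrim u (k + 1)) (Icc 0 T) := by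
  have h2 : IntegrableOn (iterPrim u k) (uIcc 0 T) := by
    rw [uIcc_of_le hT, integrableOn_Icc_iff_integrableOn_Ioc]; exact h
  have := intervalIntegral.continuousOn_primitive_interval (a := 0) (b := T) h2
  rw [uIcc_of_le hT] at this
  exact this

lemma iterPrim_integrableOn {u : ℝ → ℝ} {T : ℝ} (hT : 0 ≤ T)
    (h0 : IntegrableOn u (Ioc 0 T)) (k : ℕ) :
    IntegrableOn (iterPrim u k) (Ioc 0 T) := by
  induction k with
  | zero => exact h0
  | succ n ih =>
      have h2 : IntegrableOn (iterPrim u (n+1)) (Icc 0 T) := (iterPrim_cont hT ih).integrableOn_Icc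
      exact h2.mono_set Ioc_subset_Icc_self

theorem quadratic_kernel_ibp
    (T : ℝ) (hT : 0 < T) (m : ℕ) (H : ℝ → ℝ → ℂ)
    (hH : ContDiff ℝ 2 (Function.uncurry H))
    (u : ℝ → ℝ)
    (hu : MeasureTheory.MemLp u 2 (MeasureTheory.volume.restrict (Set.Ioc 0 T)))
    (hbc : iterPrim u (m + 1) T = 0) :
    (∫ t in (0:ℝ)..T, (iterPrim u m t : ℂ) * ∫ τ in (0:ℝ)..t, (iterPrim u m τ : ℂ) * H t τ)
      = (∫ t in (0:ℝ)..T, (iterPrim u (m + 1) t : ℂ) ^ 2 *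
            ((1 / 2) * deriv (fun s => H s s) t - deriv (fun s => H s t) t))
        + ∫ t in (0:ℝ)..T, (iterPrim u (m + 1) t : ℂ) *
            ∫ τ in (0:ℝ)..t, (iterPrim u (m + 1) τ : ℂ) *
              deriv (fun s => deriv (fun r => H s r) τ) t := by
  have hT' : (0:ℝ) ≤ T := hT.le
  -- derivative infrastructure for H
  have hH1 : ContDiff ℝ 1 (Function.uncurry H) := hH.of_le one_le_two
  have hHd : Differentiable ℝ (Function.uncurry H) := hH1.differentiable one_ne_zero
  set G : ℝ × ℝ → (ℝ × ℝ →L[ℝ] ℂ) := fderiv ℝ (Function.uncurry H) with hG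
  have hG1 : ContDiff ℝ 1 G := hH.fderiv_right (m := 1) (by norm_num)
  have hGc : Continuous G := hG1.continuous
  set p1 : ℝ × ℝ → ℂ := fun p => G p (1, 0) with hp1
  set p2 : ℝ × ℝ → ℂ := fun p => G p (0, 1) with hp2
  have hp1c : Continuous p1 := hGc.clm_apply continuous_const
  have hp2cd : ContDiff ℝ 1 p2 := hG1.clm_apply contDiff_const
  have hp2c : Continuous p2 := hp2cd.continuous
  have hasD2 : ∀ t τ, HasDerivAt (fun r => H t r) (p2 (t, τ)) τ := by
    intro t τ
    have h := (hHd (t, τ)).hasFDerivAt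
    have hline : HasDerivAt (fun r => ((t, r) : ℝ × ℝ)) (0, 1) τ :=
      HasDerivAt.prodMk (hasDerivAt_const τ t) (hasDerivAt_id τ)
    exact h.comp_hasDerivAt τ hline
  have hasD1 : ∀ t τ, HasDerivAt (fun s => H s τ) (p1 (t, τ)) t := by
    intro t τ
    have h := (hHd (t, τ)).hasFDerivAt
    have hline : HasDerivAt (fun s => ((s, τ) : ℝ × ℝ)) (1, 0) t :=
      HasDerivAt.prodMk (hasDerivAt_id t) (hasDerivAt_const t τ)
    exact h.comp_hasDerivAt t hline
  have hasDdiag : ∀ t, HasDerivAt (fun s => H s s) (p1 (t, t) + p2 (t, t)) t := by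
    intro t
    have h := (hHd (t, t)).hasFDerivAt
    have hline : HasDerivAt (fun s => ((s, s) : ℝ × ℝ)) (1, 1) t :=
      HasDerivAt.prodMk (hasDerivAt_id t) (hasDerivAt_id t)
    have h2 : HasDerivAt (fun s => Function.uncurry H ((fun s => ((s, s) : ℝ × ℝ)) s))
        (G (t, t) (1, 1)) t :=
      HasFDerivAt.comp_hasDerivAt (f := fun s => ((s, s) : ℝ × ℝ)) t h hline
    have e : G (t, t) (1, 1) = p1 (t, t) + p2 (t, t) := by
      rw [hp1, hp2, ← ContinuousLinearMap.map_add]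
      norm_num
    rwa [e] at h2
  have hP2eq : ∀ t τ, deriv (fun r => H t r) τ = p2 (t, τ) := fun t τ => (hasD2 t τ).deriv
  have hP1eq : ∀ t τ, deriv (fun s => H s τ) t = p1 (t, τ) := fun t τ => (hasD1 t τ).deriv
  have hdgeq : ∀ t, deriv (fun s => H s s) t = p1 (t, t) + p2 (t, t) :=
    fun t => (hasDdiag t).deriv
  have hp2d : Differentiable ℝ p2 := hp2cd.differentiable one_ne_zero
  set G2 : ℝ × ℝ → (ℝ × ℝ →L[ℝ] ℂ) := fderiv ℝ p2 with hG2
  have hG2c : Continuous G2 := hp2cd.continuous_fderiv one_ne_zero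
  set d12 : ℝ × ℝ → ℂ := fun p => G2 p (1, 0) with hd12
  have hd12c : Continuous d12 := hG2c.clm_apply continuous_const
  have hasD12 : ∀ t τ, HasDerivAt (fun s => p2 (s, τ)) (d12 (t, τ)) t := by
    intro t τ
    have h := (hp2d (t, τ)).hasFDerivAt
    have hline : HasDerivAt (fun s => ((s, τ) : ℝ × ℝ)) (1, 0) t :=
      HasDerivAt.prodMk (hasDerivAt_id t) (hasDerivAt_const t τ)
    exact h.comp_hasDerivAt t hline
  have hD12eq : ∀ t τ, deriv (fun s => deriv (fun r => H s r) τ) t = d12 (t, τ) := by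
    intro t τ
    have e : (fun s => deriv (fun r => H s r) τ) = fun s => p2 (s, τ) := by
      funext s; exact hP2eq s τ
    rw [e]; exact (hasD12 t τ).deriv
  -- the iterated primitives
  set v : ℝ → ℝ := iterPrim u m with hv
  set V : ℝ → ℝ := iterPrim u (m + 1) with hVd
  set vC : ℝ → ℂ := fun t => (v t : ℂ) with hvCd
  set VC : ℝ → ℂ := fun t => (V t : ℂ) with hVCd
  have hu0 : IntegrableOn u (Ioc 0 T) := hu.integrable one_le_two
  have hvI : IntegrableOn v (Ioc 0 T) := iterPrim_integrableOn hT' hu0 m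
  have hvCI : IntegrableOn vC (Ioc 0 T) := hvI.ofReal
  have hvCi : IntervalIntegrable vC volume 0 T := by
    rw [intervalIntegrable_iff_integrableOn_Ioc_of_le hT']; exact hvCI
  have hVc : ContinuousOn V (Icc 0 T) := iterPrim_cont hT' hvI
  have hVCc : ContinuousOn VC (Icc 0 T) := Complex.continuous_ofReal.comp_continuousOn hVc
  have hVCI : IntegrableOn VC (Ioc 0 T) := hVCc.integrableOn_Icc.mono_set Ioc_subset_Icc_self
  have hVC : ∀ t, VC t = ∫ s in (0:ℝ)..t, vC s := by
    intro t
    rw [hVCd]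
    simp only [hVd, iterPrim_succ_apply, hv, hvCd]
    exact intervalIntegral.integral_ofReal.symm
  have hVCT : VC T = 0 := by show (V T : ℂ) = 0; rw [hbc]; norm_num
  -- interval integrability of continuous-on-[0,T] functions
  have cOn_int : ∀ (f : ℝ → ℂ), ContinuousOn f (Icc 0 T) → ∀ a b : ℝ,
      a ∈ Icc 0 T → b ∈ Icc 0 T → IntervalIntegrable f volume a b := by
    intro f hf a b ha hb
    exact (hf.mono (uIcc_subset_Icc ha hb)).intervalIntegrable
  have hT0 : (0:ℝ) ∈ Icc 0 T := ⟨le_rfl, hT'⟩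
  have hTT : T ∈ Icc 0 T := ⟨hT', le_rfl⟩
  -- continuous clamp of VC
  set cl : ℝ → ℝ := fun t => max 0 (min t T) with hcl
  have hclc : Continuous cl := (continuous_const.max (continuous_id.min continuous_const))
  have hclmem : ∀ t, cl t ∈ Icc 0 T :=
    fun t => ⟨le_max_left _ _, max_le hT' (min_le_right _ _)⟩
  have hcl_eq : ∀ t ∈ Icc 0 T, cl t = t := by
    intro t ht
    have h1 : min t T = t := min_eq_left ht.2
    have h2 : max 0 t = t := max_eq_right ht.1
    simp only [hcl, h1, h2]
  set WC : ℝ → ℂ := fun t => VC (cl t) with hWCd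
  have hWCc : Continuous WC := hVCc.comp_continuous hclc hclmem
  have hWC : ∀ t ∈ Icc 0 T, WC t = VC t := fun t ht => by
    show VC (cl t) = VC t; rw [hcl_eq t ht]
  -- Step 1: inner integration by parts
  have step1 : ∀ t ∈ Icc 0 T,
      (∫ τ in (0:ℝ)..t, vC τ * H t τ)
        = VC t * H t t - ∫ τ in (0:ℝ)..t, VC τ * p2 (t, τ) := by
    intro t ht
    have hp2ct : Continuous fun τ => p2 (t, τ) :=
      hp2c.comp (continuous_const.prodMk continuous_id)
    have h := ibp (a := 0) (b := t) ht.1 vC (fun τ => H t τ) (fun τ => p2 (t, τ))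
      (hvCI.mono_set (Ioc_subset_Ioc_right ht.2)) (hasD2 t) hp2ct
    rw [h, ← hVC t]
    congr 1
    refine intervalIntegral.integral_congr (fun τ _ => ?_)
    rw [← hVC τ]
  -- the parametric integral W'
  set W' : ℝ → ℂ := fun t => ∫ τ in (0:ℝ)..t, WC τ * p2 (t, τ) with hW'd
  have hW'c : Continuous W' := by
    refine intervalIntegral.continuous_parametric_intervalIntegral_of_continuous
      (f := fun t τ => WC τ * p2 (t, τ)) ?_ continuous_id
    exact (hWCc.comp continuous_snd).mul
      (hp2c.comp (continuous_fst.prodMk continuous_snd))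
  have hWW' : ∀ t ∈ Icc 0 T, (∫ τ in (0:ℝ)..t, VC τ * p2 (t, τ)) = W' t := by
    intro t ht
    refine intervalIntegral.integral_congr (fun τ hτ => ?_)
    rw [uIcc_of_le ht.1] at hτ
    rw [hWC τ ⟨hτ.1, hτ.2.trans ht.2⟩]
  -- the three basic quantities
  set Q1 : ℂ := ∫ t in (0:ℝ)..T, VC t ^ 2 / 2 * (p1 (t, t) + p2 (t, t)) with hQ1
  set Q2 : ℂ := ∫ t in (0:ℝ)..T, VC t ^ 2 * p2 (t, t) with hQ2
  set Q3 : ℂ := ∫ t in (0:ℝ)..T, ∫ τ in (0:ℝ)..t, VC t * VC τ * d12 (t, τ) with hQ3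
  -- A1 and A2
  set A1 : ℂ := ∫ t in (0:ℝ)..T, vC t * (VC t * H t t) with hA1
  set A2 : ℂ := ∫ t in (0:ℝ)..T, vC t * W' t with hA2
  have hHdiagc : Continuous fun t => H t t :=
    hH1.continuous.comp (continuous_id.prodMk continuous_id)
  have iA1 : IntervalIntegrable (fun t => vC t * (VC t * H t t)) volume 0 T := by
    refine hvCi.mul_continuousOn ?_
    rw [uIcc_of_le hT']
    exact hVCc.mul hHdiagc.continuousOn
  have iA2 : IntervalIntegrable (fun t => vC t * W' t) volume 0 T :=
    hvCi.mul_continuousOn hW'c.continuousOn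
  have split12 :
      (∫ t in (0:ℝ)..T, (iterPrim u m t : ℂ) * ∫ τ in (0:ℝ)..t, (iterPrim u m τ : ℂ) * H t τ)
        = A1 - A2 := by
    have e1 : (∫ t in (0:ℝ)..T, vC t * ∫ τ in (0:ℝ)..t, vC τ * H t τ)
        = ∫ t in (0:ℝ)..T, (vC t * (VC t * H t t) - vC t * W' t) := by
      refine intervalIntegral.integral_congr (fun t ht => ?_)
      rw [uIcc_of_le hT'] at ht
      rw [step1 t ht, hWW' t ht]; ring
    show (∫ t in (0:ℝ)..T, vC t * ∫ τ in (0:ℝ)..t, vC τ * H t τ) = A1 - A2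
    rw [e1, intervalIntegral.integral_sub iA1 iA2]
  -- evaluation of A1
  have hprim_half : ∀ s ∈ Icc 0 T, (∫ t in (0:ℝ)..s, vC t * VC t) = VC s ^ 2 / 2 := by
    intro s hs
    have h1 : (∫ t in (0:ℝ)..s, vC t * VC t)
        = ∫ t in (0:ℝ)..s, vC t * ∫ r in (0:ℝ)..t, vC r :=
      intervalIntegral.integral_congr (fun t _ => by rw [hVC t])
    have hint : IntegrableOn vC (Icc 0 s) := by
      rw [integrableOn_Icc_iff_integrableOn_Ioc]
      exact hvCI.mono_set (Ioc_subset_Ioc_right hs.2)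
    rw [h1, half_sq hs.1 vC hint, ← hVC s]
  have ivCVC : IntervalIntegrable (fun t => vC t * VC t) volume 0 T := by
    refine hvCi.mul_continuousOn ?_; rw [uIcc_of_le hT']; exact hVCc
  have hA1val : A1 = -Q1 := by
    have hφ'c : Continuous fun t => p1 (t, t) + p2 (t, t) :=
      (hp1c.comp (continuous_id.prodMk continuous_id)).add
        (hp2c.comp (continuous_id.prodMk continuous_id))
    have h := ibp (a := 0) (b := T) hT' (fun t => vC t * VC t) (fun t => H t t)
      (fun t => p1 (t, t) + p2 (t, t)) (by
        rw [← intervalIntegrable_iff_integrableOn_Ioc_of_le hT']; exact ivCVC)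
      hasDdiag hφ'c
    have e0 : A1 = ∫ t in (0:ℝ)..T, (vC t * VC t) * H t t := by
      rw [hA1]; exact intervalIntegral.integral_congr (fun t _ => by ring)
    rw [e0, h, hprim_half T hTT, hVCT]
    have e1 : (∫ t in (0:ℝ)..T, (∫ s in (0:ℝ)..t, vC s * VC s) * (p1 (t, t) + p2 (t, t)))
        = Q1 := by
      rw [hQ1]
      refine intervalIntegral.integral_congr (fun t ht => ?_)
      rw [uIcc_of_le hT'] at ht
      rw [hprim_half t ht]
    rw [e1]; ring
  -- evaluation of A2 via the triangle swap
  have hd12unc : Continuous (Function.uncurry fun t τ => d12 (t, τ)) :=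
    hd12c.comp (continuous_fst.prodMk continuous_snd)
  have hp2unc : Continuous (Function.uncurry fun t τ => p2 (t, τ)) :=
    hp2c.comp (continuous_fst.prodMk continuous_snd)
  have hA2'' : A2 = ∫ t in (0:ℝ)..T, ∫ τ in (0:ℝ)..t, vC t * VC τ * p2 (t, τ) := by
    rw [hA2]
    refine intervalIntegral.integral_congr (fun t ht => ?_)
    rw [uIcc_of_le hT'] at ht
    rw [← hWW' t ht, ← intervalIntegral.integral_const_mul]
    exact intervalIntegral.integral_congr (fun τ _ => by ring)
  have swap1 := tri_swap hT' vC VC (fun t τ => p2 (t, τ)) hvCI hVCI hp2unc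
  -- inner evaluation after swapping
  have hJ : ∀ τ ∈ Icc 0 T,
      (∫ t in τ..T, vC t * VC τ * p2 (t, τ))
        = -(VC τ ^ 2 * p2 (τ, τ)) - ∫ t in τ..T, VC t * VC τ * d12 (t, τ) := by
    intro τ hτ
    have hp2cτ : Continuous fun s => p2 (s, τ) :=
      hp2c.comp (continuous_id.prodMk continuous_const)
    have hd12cτ : Continuous fun s => d12 (s, τ) :=
      hd12c.comp (continuous_id.prodMk continuous_const)
    have hvCIτ : IntegrableOn vC (Ioc τ T) := hvCI.mono_set (Ioc_subset_Ioc_left hτ.1)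
    have hvCiτ : IntervalIntegrable vC volume τ T := by
      rw [intervalIntegrable_iff_integrableOn_Ioc_of_le hτ.2]; exact hvCIτ
    have hfund : ∀ t ∈ Icc τ T, (∫ s in τ..t, vC s) = VC t - VC τ := by
      intro t ht
      rw [hVC t, hVC τ]
      have m1 : IntervalIntegrable vC volume 0 t := hvCi.mono_set
        (by rw [uIcc_of_le hT', uIcc_of_le (hτ.1.trans ht.1)]
            exact Icc_subset_Icc_right ht.2)
      have m2 : IntervalIntegrable vC volume 0 τ := hvCi.mono_set
        (by rw [uIcc_of_le hT', uIcc_of_le hτ.1]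
            exact Icc_subset_Icc_right hτ.2)
      rw [← intervalIntegral.integral_interval_sub_left m1 m2]
    have hibp := ibp (a := τ) (b := T) hτ.2 vC (fun s => p2 (s, τ)) (fun s => d12 (s, τ))
      hvCIτ (fun t => hasD12 t τ) hd12cτ
    have hFTC : (∫ t in τ..T, d12 (t, τ)) = p2 (T, τ) - p2 (τ, τ) :=
      intervalIntegral.integral_eq_sub_of_hasDerivAt
        (fun t _ => hasD12 t τ) (hd12cτ.intervalIntegrable τ T)
    have e1 : (∫ t in τ..T, vC t * VC τ * p2 (t, τ))
        = VC τ * ∫ t in τ..T, vC t * p2 (t, τ) := by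
      rw [← intervalIntegral.integral_const_mul]
      exact intervalIntegral.integral_congr (fun t _ => by ring)
    have e2 : (∫ t in τ..T, vC t) = -VC τ := by
      rw [hfund T ⟨hτ.2, le_rfl⟩, hVCT]; ring
    have e3 : (∫ t in τ..T, (∫ s in τ..t, vC s) * d12 (t, τ))
        = ∫ t in τ..T, (VC t * d12 (t, τ) - VC τ * d12 (t, τ)) := by
      refine intervalIntegral.integral_congr (fun t ht => ?_)
      rw [uIcc_of_le hτ.2] at ht
      rw [hfund t ht]; ring
    have i1 : IntervalIntegrable (fun t => VC t * d12 (t, τ)) volume τ T := by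
      refine cOn_int _ ?_ τ T hτ hTT
      exact hVCc.mul hd12cτ.continuousOn
    have i2 : IntervalIntegrable (fun t => VC τ * d12 (t, τ)) volume τ T :=
      (hd12cτ.intervalIntegrable τ T).const_mul _
    have e4 : (∫ t in τ..T, (VC t * d12 (t, τ) - VC τ * d12 (t, τ)))
        = (∫ t in τ..T, VC t * d12 (t, τ)) - VC τ * (p2 (T, τ) - p2 (τ, τ)) := by
      rw [intervalIntegral.integral_sub i1 i2, intervalIntegral.integral_const_mul, hFTC]
    have e5 : (∫ t in τ..T, VC t * VC τ * d12 (t, τ))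
        = VC τ * ∫ t in τ..T, VC t * d12 (t, τ) := by
      rw [← intervalIntegral.integral_const_mul]
      exact intervalIntegral.integral_congr (fun t _ => by ring)
    rw [e1, hibp, e2, e3, e4, e5]
    ring
  -- the parametric integral Z'
  set Z' : ℝ → ℂ := fun τ => ∫ t in τ..T, WC t * WC τ * d12 (t, τ) with hZ'd
  have hZ'c : Continuous Z' := by
    have h1 : Continuous fun τ => ∫ t in T..τ, WC t * WC τ * d12 (t, τ) := by
      refine intervalIntegral.continuous_parametric_intervalIntegral_of_continuous
        (f := fun τ t => WC t * WC τ * d12 (t, τ)) ?_ continuous_id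
      exact ((hWCc.comp continuous_snd).mul (hWCc.comp continuous_fst)).mul
        (hd12c.comp (continuous_snd.prodMk continuous_fst))
    have e : Z' = fun τ => -∫ t in T..τ, WC t * WC τ * d12 (t, τ) := by
      funext τ; rw [hZ'd]; exact intervalIntegral.integral_symm T τ
    rw [e]; exact h1.neg
  have hZ' : ∀ τ ∈ Icc 0 T, (∫ t in τ..T, VC t * VC τ * d12 (t, τ)) = Z' τ := by
    intro τ hτ
    rw [hZ'd]
    refine intervalIntegral.integral_congr (fun t ht => ?_)
    rw [uIcc_of_le hτ.2] at ht
    have ht' : t ∈ Icc 0 T := ⟨hτ.1.trans ht.1, ht.2⟩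
    rw [hWC t ht', hWC τ hτ]
  have hA2val : A2 = -Q2 - Q3 := by
    have e1 : A2 = ∫ τ in (0:ℝ)..T, (-(VC τ ^ 2 * p2 (τ, τ)) - Z' τ) := by
      rw [hA2'', swap1]
      refine intervalIntegral.integral_congr (fun τ hτ => ?_)
      rw [uIcc_of_le hT'] at hτ
      rw [hJ τ hτ, hZ' τ hτ]
    have i1 : IntervalIntegrable (fun τ => -(VC τ ^ 2 * p2 (τ, τ))) volume 0 T := by
      refine (cOn_int _ ?_ 0 T hT0 hTT).neg
      exact (hVCc.pow 2).mul (hp2c.comp (continuous_id.prodMk continuous_id)).continuousOn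
    have i2 : IntervalIntegrable Z' volume 0 T := hZ'c.intervalIntegrable 0 T
    have e2 : (∫ τ in (0:ℝ)..T, (-(VC τ ^ 2 * p2 (τ, τ)) - Z' τ))
        = (∫ τ in (0:ℝ)..T, -(VC τ ^ 2 * p2 (τ, τ))) - ∫ τ in (0:ℝ)..T, Z' τ :=
      intervalIntegral.integral_sub i1 i2
    have swap2 := tri_swap hT' VC VC (fun t τ => d12 (t, τ)) hVCI hVCI hd12unc
    have e3 : (∫ τ in (0:ℝ)..T, Z' τ) = Q3 := by
      rw [hQ3, swap2]
      refine intervalIntegral.integral_congr (fun τ hτ => ?_)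
      rw [uIcc_of_le hT'] at hτ
      exact (hZ' τ hτ).symm
    have e4 : (∫ τ in (0:ℝ)..T, -(VC τ ^ 2 * p2 (τ, τ))) = -Q2 := by
      rw [hQ2, ← intervalIntegral.integral_neg]
    rw [e1, e2, e3, e4]
  -- identification of the right-hand side
  have hRHS1 : (∫ t in (0:ℝ)..T, (iterPrim u (m + 1) t : ℂ) ^ 2 *
          ((1 / 2) * deriv (fun s => H s s) t - deriv (fun s => H s t) t))
        = Q2 - Q1 := by
    have e1 : (∫ t in (0:ℝ)..T, VC t ^ 2 *
          ((1 / 2) * deriv (fun s => H s s) t - deriv (fun s => H s t) t))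
        = ∫ t in (0:ℝ)..T, (VC t ^ 2 * p2 (t, t) - VC t ^ 2 / 2 * (p1 (t, t) + p2 (t, t))) := by
      refine intervalIntegral.integral_congr (fun t _ => ?_)
      rw [hdgeq t, hP1eq t t]; ring
    have i1 : IntervalIntegrable (fun t => VC t ^ 2 * p2 (t, t)) volume 0 T := by
      refine cOn_int _ ?_ 0 T hT0 hTT
      exact (hVCc.pow 2).mul (hp2c.comp (continuous_id.prodMk continuous_id)).continuousOn
    have i2 : IntervalIntegrable (fun t => VC t ^ 2 / 2 * (p1 (t, t) + p2 (t, t)))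
        volume 0 T := by
      refine cOn_int _ ?_ 0 T hT0 hTT
      exact ((hVCc.pow 2).div_const 2).mul
        ((hp1c.comp (continuous_id.prodMk continuous_id)).add
          (hp2c.comp (continuous_id.prodMk continuous_id))).continuousOn
    calc (∫ t in (0:ℝ)..T, (iterPrim u (m + 1) t : ℂ) ^ 2 *
          ((1 / 2) * deriv (fun s => H s s) t - deriv (fun s => H s t) t))
        = ∫ t in (0:ℝ)..T, (VC t ^ 2 * p2 (t, t) - VC t ^ 2 / 2 * (p1 (t, t) + p2 (t, t))) := e1
      _ = Q2 - Q1 := by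
          rw [intervalIntegral.integral_sub i1 i2, hQ1, hQ2]
  have hRHS2 : (∫ t in (0:ℝ)..T, (iterPrim u (m + 1) t : ℂ) *
          ∫ τ in (0:ℝ)..t, (iterPrim u (m + 1) τ : ℂ) *
            deriv (fun s => deriv (fun r => H s r) τ) t)
        = Q3 := by
    rw [hQ3]
    refine intervalIntegral.integral_congr (fun t _ => ?_)
    rw [← intervalIntegral.integral_const_mul]
    refine intervalIntegral.integral_congr (fun τ _ => ?_)
    rw [hD12eq t τ]; ring
  rw [split12, hRHS1, hRHS2, hA1val, hA2val]
  ring
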